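/- The swapped Matsumoto–Yor map H̃(x,u) = (1/u − 1/(x+u), 1/(x+u)) is an involution on ℝ₊², and it is the unique involution on ℝ₊² with first component f̃(x,u) = 1/u − 1/(x+u). -/

import Mathlib

/-- the swapped Matsumoto–Yor map `H̃(x,u) = (1/u - 1/(x+u), 1/(x+u))`
is an involution on the positive quadrant, and it is the unique involution there with
first component `f̃(x,u) = 1/u - 1/(x+u)`. -/
theorem swapped_matsumoto_yor_involution_and_unique :
    (∀ x u : ℝ, 0 < x → 0 < u →
      (fun p : ℝ × ℝ => (1 / p.2 - 1 / (p.1 + p.2), 1 / (p.1 + p.2)))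
        ((fun p : ℝ × ℝ => (1 / p.2 - 1 / (p.1 + p.2), 1 / (p.1 + p.2))) (x, u)) = (x, u)) ∧
    (∀ g : ℝ → ℝ → ℝ,
      (∀ x u : ℝ, 0 < x → 0 < u → 0 < g x u) →
      (∀ x u : ℝ, 0 < x → 0 < u →
        (1 / g x u - 1 / ((1 / u - 1 / (x + u)) + g x u) = x ∧
          g (1 / u - 1 / (x + u)) (g x u) = u)) →
      ∀ x u : ℝ, 0 < x → 0 < u → g x u = 1 / (x + u)) := by
  constructor
  · intro x u hx hu
    have hs : (0:ℝ) < x + u := by linarith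
    simp only [Prod.mk.injEq]
    constructor
    · field_simp [hs.ne', hu.ne']
      ring
    · field_simp [hs.ne', hu.ne']
      ring
  · intro g hpos heq x u hx hu
    set t := g x u with ht
    have htpos : 0 < t := hpos x u hx hu
    have hs : (0:ℝ) < x + u := by linarith
    have hf : (0:ℝ) < 1 / u - 1 / (x + u) := by
      rw [sub_pos]
      apply one_div_lt_one_div_of_lt hu
      linarith
    have hft : (0:ℝ) < (1 / u - 1 / (x + u)) + t := by linarith
    have h1 := (heq x u hx hu).1
    have hkey : (t * (x + u) - 1) * (t * u + 1) = 0 := by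
      rw [← ht] at h1
      have e : 1 / u - 1 / (x + u) + t = (x + t * u * (x + u)) / (u * (x + u)) := by
        field_simp
        ring
      rw [e] at h1
      have hd : 0 < x + t * u * (x + u) := by positivity
      field_simp at h1
      nlinarith [h1, sq_nonneg t]
    have h2 : t * (x + u) - 1 = 0 := by
      rcases mul_eq_zero.mp hkey with h | h
      · exact h
      · nlinarith
    field_simp
    linarith
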